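/- arXiv:1610.00362 — 2 statements merged into one kernel-verified Lean document; each statement's English description precedes it below -/
import Mathlib

section
/- Let W = (w_{ij}) be a symmetric array of nonnegative real weights (w_{ij} ≥ 0 for all i, j, including diagonals) on a vertex set V, and for a finite subset S define w(S) = Σ_{i,j∈S, i<j} w_{ij} + Σ_{i∈S} w_{ii}. Let S be a finite subset with |S| ≥ 2 and let v ∈ S minimize Σ_{j∈S} w_{vj} over vertices in S. Then w(S∖{v}) ≥ ((|S| − 2)/|S|)·w(S). -/
/-- The total weight w(S) of the subgraph induced by S: each (non-self) edge {i,j},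
i < j, counted once, plus each self-edge counted once. -/
def inducedWeight {V : Type*} [LinearOrder V] (w : V → V → ℝ) (S : Finset V) : ℝ :=
  ∑ p ∈ (S ×ˢ S).filter (fun p => p.1 < p.2), w p.1 p.2 + ∑ i ∈ S, w i i

lemma two_iW {V : Type*} [LinearOrder V] (w : V → V → ℝ)
    (hsymm : ∀ i j, w i j = w j i) (S : Finset V) :
    2 * inducedWeight w S = (∑ i ∈ S, ∑ j ∈ S, w i j) + ∑ i ∈ S, w i i := by
  have hprod : ∑ i ∈ S, ∑ j ∈ S, w i j = ∑ p ∈ S ×ˢ S, w p.1 p.2 :=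
    (Finset.sum_product S S (fun p => w p.1 p.2)).symm
  have hsplit := Finset.sum_filter_add_sum_filter_not (S ×ˢ S)
    (fun p => p.1 < p.2) (fun p => w p.1 p.2)
  have hsplit2 := Finset.sum_filter_add_sum_filter_not
    ((S ×ˢ S).filter (fun p => ¬ p.1 < p.2)) (fun p => p.1 = p.2) (fun p => w p.1 p.2)
  have heq1 : ((S ×ˢ S).filter (fun p => ¬ p.1 < p.2)).filter (fun p => p.1 = p.2)
      = (S ×ˢ S).filter (fun p => p.1 = p.2) := by
    rw [Finset.filter_filter]
    apply Finset.filter_congr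
    intro p _
    constructor
    · exact fun h => h.2
    · exact fun h => ⟨fun hlt => absurd h (ne_of_lt hlt), h⟩
  have heq2 : (((S ×ˢ S).filter (fun p => ¬ p.1 < p.2)).filter (fun p => ¬ p.1 = p.2))
      = (S ×ˢ S).filter (fun p => p.2 < p.1) := by
    rw [Finset.filter_filter]
    apply Finset.filter_congr
    intro p _
    constructor
    · rintro ⟨h1, h2⟩
      exact (not_lt.1 h1).lt_of_ne (fun e => h2 e.symm)
    · intro h
      exact ⟨not_lt.2 h.le, fun e => absurd h (by simp [e])⟩
  have hswap : ∑ p ∈ (S ×ˢ S).filter (fun p => p.2 < p.1), w p.1 p.2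
      = ∑ p ∈ (S ×ˢ S).filter (fun p => p.1 < p.2), w p.1 p.2 := by
    refine Finset.sum_nbij' Prod.swap Prod.swap ?_ ?_ ?_ ?_ ?_
    · intro p hp
      simp only [Finset.mem_filter, Finset.mem_product] at *
      exact ⟨⟨hp.1.2, hp.1.1⟩, hp.2⟩
    · intro p hp
      simp only [Finset.mem_filter, Finset.mem_product] at *
      exact ⟨⟨hp.1.2, hp.1.1⟩, hp.2⟩
    · intro p _; simp
    · intro p _; simp
    · intro p _; exact hsymm p.1 p.2
  have hdiag : ∑ p ∈ (S ×ˢ S).filter (fun p => p.1 = p.2), w p.1 p.2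
      = ∑ i ∈ S, w i i := by
    refine Finset.sum_nbij' (fun p => p.1) (fun i => (i, i)) ?_ ?_ ?_ ?_ ?_
    · intro p hp
      simp only [Finset.mem_filter, Finset.mem_product] at hp
      exact hp.1.1
    · intro i hi
      simp [hi]
    · intro p hp
      simp only [Finset.mem_filter, Finset.mem_product] at hp
      exact Prod.ext rfl hp.2
    · intro i _; rfl
    · intro p hp
      simp only [Finset.mem_filter, Finset.mem_product] at hp
      show w p.1 p.2 = w p.1 p.1
      exact congrArg (w p.1) hp.2.symm
  rw [inducedWeight, hprod]
  rw [heq1, heq2] at hsplit2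
  rw [hswap] at hsplit2
  rw [hdiag] at hsplit2
  linarith [hsplit, hsplit2]

lemma iW_erase {V : Type*} [LinearOrder V] (w : V → V → ℝ)
    (hsymm : ∀ i j, w i j = w j i) (S : Finset V) (v : V) (hv : v ∈ S) :
    inducedWeight w (S.erase v) = inducedWeight w S - ∑ j ∈ S, w v j := by
  have h1 := two_iW w hsymm S
  have h2 := two_iW w hsymm (S.erase v)
  set T := S.erase v with hT
  have hd : ∀ f : V → ℝ, ∑ i ∈ S, f i = f v + ∑ i ∈ T, f i := by
    intro f
    rw [hT, ← Finset.sum_erase_add S f hv]; ring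
  have hrow : ∀ i, ∑ j ∈ S, w i j = w i v + ∑ j ∈ T, w i j := fun i => hd (w i)
  have hmain : ∑ i ∈ S, ∑ j ∈ S, w i j
      = (∑ j ∈ S, w v j) + (∑ i ∈ T, w i v) + ∑ i ∈ T, ∑ j ∈ T, w i j := by
    rw [hd (fun i => ∑ j ∈ S, w i j)]
    rw [Finset.sum_congr rfl (fun i _ => hrow i), Finset.sum_add_distrib]
    ring
  have hcol : ∑ i ∈ T, w i v = (∑ j ∈ S, w v j) - w v v := by
    rw [Finset.sum_congr rfl (fun i _ => hsymm i v), hd (w v)]; ring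
  have hdg : ∑ i ∈ S, w i i = w v v + ∑ i ∈ T, w i i := hd (fun i => w i i)
  rw [hmain, hcol, hdg] at h1
  linarith

/-- For a symmetric nonnegative weight array w, a finite S with |S| ≥ 2 and
v ∈ S minimizing Σ_{j∈S} w_{vj}, one has w(S∖{v}) ≥ ((|S| − 2)/|S|)·w(S). -/
theorem stmt_14 {V : Type*} [LinearOrder V] (w : V → V → ℝ)
    (hsymm : ∀ i j, w i j = w j i) (hnonneg : ∀ i j, 0 ≤ w i j)
    (S : Finset V) (hS : 2 ≤ S.card)
    (v : V) (hv : v ∈ S) (hmin : ∀ u ∈ S, ∑ j ∈ S, w v j ≤ ∑ j ∈ S, w u j) :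
    inducedWeight w (S.erase v)
      ≥ (((S.card : ℝ) - 2) / (S.card : ℝ)) * inducedWeight w S := by
  set n : ℝ := (S.card : ℝ) with hn
  have hn2 : (2 : ℝ) ≤ n := by rw [hn]; exact_mod_cast hS
  have hnpos : (0 : ℝ) < n := by linarith
  set d : ℝ := ∑ j ∈ S, w v j with hdv
  have herase := iW_erase w hsymm S v hv
  have h2 := two_iW w hsymm S
  have hiWnn : 0 ≤ inducedWeight w S := by
    apply add_nonneg <;> exact Finset.sum_nonneg (fun _ _ => by apply hnonneg)
  have hdiagnn : 0 ≤ ∑ i ∈ S, w i i := Finset.sum_nonneg (fun _ _ => hnonneg _ _)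
  have hcard : n * d ≤ ∑ u ∈ S, ∑ j ∈ S, w u j := by
    have := Finset.card_nsmul_le_sum S (fun u => ∑ j ∈ S, w u j) d hmin
    simpa [nsmul_eq_mul] using this
  have hkey : n * d ≤ 2 * inducedWeight w S := by linarith
  rw [ge_iff_le, div_mul_eq_mul_div, div_le_iff₀ hnpos, herase]
  nlinarith
end

section
/- Let W = (w_{ij}) be a symmetric array of nonnegative real weights (including nonnegative self-edges w_{ii} ≥ 0) on a vertex set V, and for a finite subset S define w(S) = Σ_{i,j∈S, i<j} w_{ij} + Σ_{i∈S} w_{ii}. Let S be a finite subset with |S| = m ≥ k ≥ 2, and let S̃ be obtained from S by repeatedly removing a vertex v minimizing Σ_{j} w_{vj} over the current set, until exactly k vertices remain. Then w(S̃) ≥ (k(k−1))/(m(m−1))·w(S). If instead |S| ≤ k and S̃ is obtained by adding arbitrary vertices until |S̃| = k, then w(S̃) ≥ w(S). -/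
/-- One step of the greedy resizing procedure: pass from S to S∖{v}, where v minimizes
the induced weight Σ_{j∈S} w_{vj} over the vertices of S. -/
def GreedyStep {V : Type*} [LinearOrder V] (w : V → V → ℝ) (S S' : Finset V) : Prop :=
  ∃ v ∈ S, (∀ u ∈ S, ∑ j ∈ S, w v j ≤ ∑ j ∈ S, w u j) ∧ S' = S.erase v

lemma iw_nonneg {V : Type*} [LinearOrder V] (w : V → V → ℝ)
    (hnonneg : ∀ i j, 0 ≤ w i j) (S : Finset V) : 0 ≤ inducedWeight w S := by
  unfold inducedWeight
  have h1 : (0:ℝ) ≤ ∑ p ∈ (S ×ˢ S).filter (fun p => p.1 < p.2), w p.1 p.2 :=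
    Finset.sum_nonneg fun p _ => hnonneg _ _
  have h2 : (0:ℝ) ≤ ∑ i ∈ S, w i i := Finset.sum_nonneg fun i _ => hnonneg _ _
  linarith

lemma iw_mono {V : Type*} [LinearOrder V] (w : V → V → ℝ)
    (hnonneg : ∀ i j, 0 ≤ w i j) {S T : Finset V} (hST : S ⊆ T) :
    inducedWeight w S ≤ inducedWeight w T := by
  unfold inducedWeight
  have h1 : ∑ p ∈ (S ×ˢ S).filter (fun p => p.1 < p.2), w p.1 p.2
      ≤ ∑ p ∈ (T ×ˢ T).filter (fun p => p.1 < p.2), w p.1 p.2 := by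
    apply Finset.sum_le_sum_of_subset_of_nonneg
    · exact Finset.filter_subset_filter _ (Finset.product_subset_product hST hST)
    · exact fun p _ _ => hnonneg _ _
  have h2 : ∑ i ∈ S, w i i ≤ ∑ i ∈ T, w i i :=
    Finset.sum_le_sum_of_subset_of_nonneg hST fun i _ _ => hnonneg _ _
  linarith

lemma sum_sum_add_diag {V : Type*} [LinearOrder V] (w : V → V → ℝ)
    (hsymm : ∀ i j, w i j = w j i) (S : Finset V) :
    ∑ i ∈ S, ∑ j ∈ S, w i j + ∑ i ∈ S, w i i = 2 * inducedWeight w S := by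
  have hprod : ∑ i ∈ S, ∑ j ∈ S, w i j = ∑ p ∈ S ×ˢ S, w p.1 p.2 :=
    (Finset.sum_product (s := S) (t := S) (f := fun p => w p.1 p.2)).symm
  have hsplit : ∑ p ∈ S ×ˢ S, w p.1 p.2
      = ∑ p ∈ (S ×ˢ S).filter (fun p => p.1 < p.2), w p.1 p.2
        + ∑ p ∈ (S ×ˢ S).filter (fun p => ¬ p.1 < p.2), w p.1 p.2 :=
    (Finset.sum_filter_add_sum_filter_not _ _ _).symm
  have hsplit2 : ∑ p ∈ (S ×ˢ S).filter (fun p => ¬ p.1 < p.2), w p.1 p.2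
      = ∑ p ∈ (S ×ˢ S).filter (fun p => p.2 < p.1), w p.1 p.2
        + ∑ p ∈ (S ×ˢ S).filter (fun p : V × V => p.1 = p.2), w p.1 p.2 := by
    rw [← Finset.sum_filter_add_sum_filter_not ((S ×ˢ S).filter (fun p => ¬ p.1 < p.2))
      (fun p => p.2 < p.1)]
    congr 1
    · congr 1
      rw [Finset.filter_filter]
      apply Finset.filter_congr
      intro p _
      constructor
      · rintro ⟨_, h⟩; exact h
      · intro h; exact ⟨not_lt_of_gt h, h⟩
    · congr 1
      rw [Finset.filter_filter]
      apply Finset.filter_congr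
      intro p _
      simp only [not_lt]
      constructor
      · rintro ⟨h1, h2⟩; exact le_antisymm h2 h1
      · intro h; exact ⟨h.ge, h.le⟩
  have hswap : ∑ p ∈ (S ×ˢ S).filter (fun p => p.2 < p.1), w p.1 p.2
      = ∑ p ∈ (S ×ˢ S).filter (fun p => p.1 < p.2), w p.1 p.2 := by
    apply Finset.sum_nbij' (i := Prod.swap) (j := Prod.swap)
    · intro p hp
      simp only [Finset.mem_filter, Finset.mem_product] at hp ⊢
      exact ⟨⟨hp.1.2, hp.1.1⟩, hp.2⟩
    · intro p hp
      simp only [Finset.mem_filter, Finset.mem_product] at hp ⊢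
      exact ⟨⟨hp.1.2, hp.1.1⟩, hp.2⟩
    · intro p _; rfl
    · intro p _; rfl
    · intro p _; exact hsymm p.1 p.2
  have hdiag : ∑ p ∈ (S ×ˢ S).filter (fun p : V × V => p.1 = p.2), w p.1 p.2
      = ∑ i ∈ S, w i i := by
    apply Finset.sum_nbij' (i := fun p => p.1) (j := fun i => (i, i))
    · intro p hp
      simp only [Finset.mem_filter, Finset.mem_product] at hp
      exact hp.1.1
    · intro i hi
      exact Finset.mem_filter.mpr ⟨Finset.mem_product.mpr ⟨hi, hi⟩, rfl⟩
    · intro p hp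
      have hp' : p.1 = p.2 := (Finset.mem_filter.mp hp).2
      exact Prod.ext rfl hp'
    · intro i _; rfl
    · intro p hp
      simp only [Finset.mem_filter, Finset.mem_product] at hp
      rw [hp.2]
  unfold inducedWeight
  rw [hprod, hsplit, hsplit2, hswap, hdiag]
  ring

lemma iw_erase {V : Type*} [LinearOrder V] (w : V → V → ℝ)
    (hsymm : ∀ i j, w i j = w j i) {S : Finset V} {v : V} (hv : v ∈ S) :
    inducedWeight w (S.erase v) = inducedWeight w S - ∑ j ∈ S, w v j := by
  have hD : ∑ i ∈ S.erase v, w i i + w v v = ∑ i ∈ S, w i i :=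
    Finset.sum_erase_add S _ hv
  have hcol : ∑ i ∈ S.erase v, w i v = ∑ j ∈ S, w v j - w v v := by
    have : ∑ i ∈ S.erase v, w i v + w v v = ∑ i ∈ S, w i v :=
      Finset.sum_erase_add S _ hv
    have h2 : ∑ i ∈ S, w i v = ∑ j ∈ S, w v j :=
      Finset.sum_congr rfl fun i _ => hsymm i v
    linarith
  have hF : ∑ i ∈ S, ∑ j ∈ S, w i j
      = ∑ i ∈ S.erase v, ∑ j ∈ S.erase v, w i j + 2 * ∑ j ∈ S, w v j - w v v := by
    have h1 : ∑ i ∈ S.erase v, ∑ j ∈ S, w i j + ∑ j ∈ S, w v j = ∑ i ∈ S, ∑ j ∈ S, w i j :=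
      Finset.sum_erase_add S _ hv
    have h2 : ∑ i ∈ S.erase v, ∑ j ∈ S, w i j
        = ∑ i ∈ S.erase v, (∑ j ∈ S.erase v, w i j + w i v) :=
      Finset.sum_congr rfl fun i _ => (Finset.sum_erase_add S _ hv).symm
    rw [Finset.sum_add_distrib] at h2
    rw [hcol] at h2
    linarith
  have hA := sum_sum_add_diag w hsymm S
  have hB := sum_sum_add_diag w hsymm (S.erase v)
  linarith

lemma step_card {V : Type*} [LinearOrder V] {w : V → V → ℝ} {S S' : Finset V}
    (h : GreedyStep w S S') : S'.card + 1 = S.card := by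
  obtain ⟨v, hv, _, rfl⟩ := h
  exact Finset.card_erase_add_one hv

lemma chain_card_le {V : Type*} [LinearOrder V] {w : V → V → ℝ} {S T : Finset V}
    (h : Relation.ReflTransGen (GreedyStep w) S T) : T.card ≤ S.card := by
  induction h with
  | refl => exact le_refl _
  | tail _ hstep ih =>
    have := step_card hstep
    omega

lemma step_ineq {V : Type*} [LinearOrder V] {w : V → V → ℝ}
    (hsymm : ∀ i j, w i j = w j i) (hnonneg : ∀ i j, 0 ≤ w i j) {S S' : Finset V}
    (h : GreedyStep w S S') :
    ((S.card : ℝ) - 2) * inducedWeight w S ≤ (S.card : ℝ) * inducedWeight w S' := by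
  obtain ⟨v, hv, hmin, rfl⟩ := h
  have herase := iw_erase w hsymm hv
  have hmd : (S.card : ℝ) * ∑ j ∈ S, w v j ≤ ∑ u ∈ S, ∑ j ∈ S, w u j := by
    have := Finset.card_nsmul_le_sum S (fun u => ∑ j ∈ S, w u j) (∑ j ∈ S, w v j)
      (fun u hu => hmin u hu)
    simpa [nsmul_eq_mul] using this
  have hdiag : (0:ℝ) ≤ ∑ i ∈ S, w i i := Finset.sum_nonneg fun i _ => hnonneg i i
  have hA := sum_sum_add_diag w hsymm S
  nlinarith [Nat.cast_nonneg (α := ℝ) S.card]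

/-- For a symmetric nonnegative weight array w: (i) if T is obtained from
S (|S| = m ≥ k ≥ 2) by repeatedly removing a minimizing vertex until |T| = k, then
w(T) ≥ (k(k−1))/(m(m−1))·w(S); (ii) if instead |S| ≤ k and T ⊇ S with |T| = k is
obtained by adding arbitrary vertices, then w(T) ≥ w(S). -/
theorem stmt_15 {V : Type*} [LinearOrder V] (w : V → V → ℝ)
    (hsymm : ∀ i j, w i j = w j i) (hnonneg : ∀ i j, 0 ≤ w i j) (k : ℕ) (hk : 2 ≤ k) :
    (∀ (S T : Finset V) (m : ℕ), S.card = m → k ≤ m →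
      Relation.ReflTransGen (GreedyStep w) S T → T.card = k →
      inducedWeight w T
        ≥ ((k : ℝ) * ((k : ℝ) - 1)) / ((m : ℝ) * ((m : ℝ) - 1)) * inducedWeight w S) ∧
    (∀ S T : Finset V, S.card ≤ k → S ⊆ T → T.card = k →
      inducedWeight w T ≥ inducedWeight w S) := by
  constructor
  · have main : ∀ T : Finset V, T.card = k → ∀ S : Finset V,
        Relation.ReflTransGen (GreedyStep w) S T →
        inducedWeight w T
          ≥ ((k : ℝ) * ((k : ℝ) - 1)) / ((S.card : ℝ) * ((S.card : ℝ) - 1))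
            * inducedWeight w S := by
      intro T hTk S hchain
      induction hchain using Relation.ReflTransGen.head_induction_on with
      | refl =>
        rw [hTk]
        have hkpos : (0:ℝ) < (k:ℝ) * ((k:ℝ) - 1) := by
          have : (2:ℝ) ≤ (k:ℝ) := by exact_mod_cast hk
          nlinarith
        rw [div_self (ne_of_gt hkpos), one_mul]
      | head hstep hchain ih =>
        rename_i a c
        have hcard : c.card + 1 = a.card := step_card hstep
        have hkc : k ≤ c.card := hTk ▸ chain_card_le hchain
        have hm3 : 3 ≤ a.card := by omega
        set m : ℝ := (a.card : ℝ) with hm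
        have hmval : (3:ℝ) ≤ m := by rw [hm]; exact_mod_cast hm3
        have hc_cast : (c.card : ℝ) = m - 1 := by
          rw [hm]
          have : (c.card : ℝ) + 1 = (a.card : ℝ) := by exact_mod_cast hcard
          linarith
        have hstepin := step_ineq hsymm hnonneg hstep
        have hKnn : (0:ℝ) ≤ (k:ℝ) * ((k:ℝ) - 1) := by
          have : (2:ℝ) ≤ (k:ℝ) := by exact_mod_cast hk
          nlinarith
        have hr'nn : (0:ℝ) ≤ ((k:ℝ) * ((k:ℝ) - 1)) / ((m - 1) * ((m - 1) - 1)) := by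
          apply div_nonneg hKnn
          nlinarith
        rw [hc_cast] at ih
        -- iw c ≥ (m-2)/m * iw a
        have hc_ge : (m - 2) / m * inducedWeight w a ≤ inducedWeight w c := by
          rw [div_mul_eq_mul_div, div_le_iff₀ (by linarith : (0:ℝ) < m)]
          nlinarith
        have h2 : ((k:ℝ) * ((k:ℝ) - 1)) / ((m - 1) * ((m - 1) - 1))
            * ((m - 2) / m * inducedWeight w a)
            ≤ ((k:ℝ) * ((k:ℝ) - 1)) / ((m - 1) * ((m - 1) - 1)) * inducedWeight w c :=
          mul_le_mul_of_nonneg_left hc_ge hr'nn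
        have heq : ((k:ℝ) * ((k:ℝ) - 1)) / ((m - 1) * ((m - 1) - 1))
            * ((m - 2) / m * inducedWeight w a)
            = ((k:ℝ) * ((k:ℝ) - 1)) / (m * (m - 1)) * inducedWeight w a := by
          have h0 : m ≠ 0 := by linarith
          have h1 : m - 1 ≠ 0 := by intro h; nlinarith
          have h2' : m - 1 - 1 ≠ 0 := by intro h; nlinarith
          have hsc : ((k:ℝ) * ((k:ℝ) - 1)) / ((m - 1) * ((m - 1) - 1)) * ((m - 2) / m)
              = ((k:ℝ) * ((k:ℝ) - 1)) / (m * (m - 1)) := by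
            field_simp
            ring
          rw [← mul_assoc, hsc]
        calc ((k:ℝ) * ((k:ℝ) - 1)) / (m * (m - 1)) * inducedWeight w a
            = ((k:ℝ) * ((k:ℝ) - 1)) / ((m - 1) * ((m - 1) - 1))
              * ((m - 2) / m * inducedWeight w a) := heq.symm
          _ ≤ ((k:ℝ) * ((k:ℝ) - 1)) / ((m - 1) * ((m - 1) - 1)) * inducedWeight w c := h2
          _ ≤ inducedWeight w T := ih
    intro S T m hSm hkm hchain hTk
    subst hSm
    exact main T hTk S hchain
  · intro S T _ hST _
    exact iw_mono w hnonneg hST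
end
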